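/- Let G = Q_{4p} with p an odd prime, presented as <a, t | a^{2p} = 1, t^2 = a^p, a*t = t*a^{-1}>, and let R be a finite multiset over G all of whose elements lie in the coset t<a>, say with elements t*a^{r_i}. Then R is a product-one sequence if and only if |R| is even and R can be partitioned into two multisets R^+ and R^- with |R^+| = |R^-| = |R|/2 such that the sum of exponents of R^- minus the sum of exponents of R^+ is congruent to (|R|/2) * p modulo 2p. -/

import Mathlib

/-- The set of products of a multiset `S` over `G`: all elements obtained by
multiplying the terms of `S` in some order. -/
def prodSet {G : Type*} [Group G] (S : Multiset G) : Set G :=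
  {g | ∃ l : List G, (l : Multiset G) = S ∧ l.prod = g}

/-- `S` is a product-one sequence if its terms can be ordered with product `1`. -/
def IsProductOne {G : Type*} [Group G] (S : Multiset G) : Prop :=
  (1 : G) ∈ prodSet S

/-- `S` is product-one free if no nonempty sub-multiset is a product-one sequence. -/
def ProductOneFree {G : Type*} [Group G] (S : Multiset G) : Prop :=
  ∀ T : Multiset G, T ≤ S → T ≠ 0 → ¬ IsProductOne T

/-- `S` is a minimal product-one sequence (an atom): a nonempty product-one sequence
that cannot be factored into two nonempty product-one sub-multisets. -/
def IsMinimalProductOne {G : Type*} [Group G] (S : Multiset G) : Prop :=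
  S ≠ 0 ∧ IsProductOne S ∧
    ¬ ∃ T T' : Multiset G, S = T + T' ∧ T ≠ 0 ∧ T' ≠ 0 ∧ IsProductOne T ∧ IsProductOne T'

/-- The small Davenport constant: the supremum of lengths of product-one free sequences. -/
noncomputable def smallDavenport (G : Type*) [Group G] : ℕ∞ :=
  sSup {n : ℕ∞ | ∃ S : Multiset G, ProductOneFree S ∧ (S.card : ℕ∞) = n}

/-- The large Davenport constant: the supremum of lengths of minimal product-one sequences. -/
noncomputable def largeDavenport (G : Type*) [Group G] : ℕ∞ :=
  sSup {n : ℕ∞ | ∃ S : Multiset G, IsMinimalProductOne S ∧ (S.card : ℕ∞) = n}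


open QuaternionGroup

private def interL {α : Type*} : List α → List α → List α
  | x :: xs, y :: ys => x :: y :: interL xs ys
  | _, _ => []

private lemma interL_coe {α : Type*} : ∀ (xs ys : List α), xs.length = ys.length →
    (interL xs ys : Multiset α) = (xs : Multiset α) + (ys : Multiset α)
  | [], [], _ => rfl
  | x :: xs, y :: ys, h => by
    have := interL_coe xs ys (by simpa using h)
    simp only [interL, ← Multiset.cons_coe]
    rw [this]
    simp only [Multiset.cons_add, Multiset.cons_coe, Multiset.coe_add, Multiset.cons_swap,
      Multiset.coe_eq_coe]
    exact List.Perm.cons x List.perm_middle.symm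
  | [], _ :: _, h => by simp at h
  | _ :: _, [], h => by simp at h

private lemma interL_prod (p : ℕ) : ∀ (xs ys : List (ZMod (2 * p))), xs.length = ys.length →
    ((interL xs ys).map (xa : ZMod (2 * p) → QuaternionGroup p)).prod =
      a ((xs.length : ZMod (2 * p)) * (p : ZMod (2 * p)) + ys.sum - xs.sum)
  | [], [], _ => by simp [interL]
  | x :: xs, y :: ys, h => by
    have ih := interL_prod p xs ys (by simpa using h)
    simp only [interL, List.map_cons, List.prod_cons, ih, xa_mul_a, xa_mul_xa]
    congr 1
    simp only [List.length_cons, List.sum_cons]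
    push_cast
    ring
  | [], _ :: _, h => by simp at h
  | _ :: _, [], h => by simp at h

private def expo {p : ℕ} : QuaternionGroup p → ZMod (2 * p)
  | QuaternionGroup.a _ => 0
  | QuaternionGroup.xa i => i

private lemma prod_map_xa_even (p : ℕ) : ∀ (n : ℕ) (r : List (ZMod (2 * p))),
    r.length = 2 * n →
    ∃ rp rm : List (ZMod (2 * p)), rp.length = n ∧ rm.length = n ∧
      (rp : Multiset (ZMod (2 * p))) + (rm : Multiset (ZMod (2 * p))) = (r : Multiset _) ∧
      (r.map (xa : ZMod (2 * p) → QuaternionGroup p)).prod =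
        a ((n : ZMod (2 * p)) * (p : ZMod (2 * p)) + rm.sum - rp.sum)
  | 0, r, hr => by
    have : r = [] := List.length_eq_zero_iff.mp (by omega)
    subst this
    exact ⟨[], [], rfl, rfl, rfl, by simp⟩
  | n + 1, [], hr => by simp at hr
  | n + 1, [x], hr => by simp at hr; omega
  | n + 1, x :: y :: r, hr => by
    obtain ⟨rp, rm, h1, h2, h3, h4⟩ := prod_map_xa_even p n r (by simp at hr; omega)
    refine ⟨x :: rp, y :: rm, by simp [h1], by simp [h2], ?_, ?_⟩
    · simp only [← Multiset.cons_coe, Multiset.cons_add, Multiset.add_cons] at h3 ⊢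
      rw [h3, Multiset.cons_swap]
    · simp only [List.map_cons, List.prod_cons, h4, xa_mul_a, xa_mul_xa]
      congr 1
      simp only [List.length_cons, List.sum_cons]
      push_cast
      ring

private lemma prod_map_xa_odd (p : ℕ) (n : ℕ) (r : List (ZMod (2 * p)))
    (hr : r.length = 2 * n + 1) :
    ∃ s, (r.map (xa : ZMod (2 * p) → QuaternionGroup p)).prod = xa s := by
  match r with
  | [] => simp at hr
  | x :: r =>
    obtain ⟨rp, rm, _, _, _, h4⟩ := prod_map_xa_even p n r (by simpa using hr)
    refine ⟨x + (↑n * ↑p + rm.sum - rp.sum), ?_⟩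
    simp only [List.map_cons, List.prod_cons, h4, xa_mul_a]

/-- In `Q_{4p}` (`p` an odd prime), a multiset of elements `t * a ^ rᵢ` from the coset
`t⟨a⟩` (encoded by its exponents `rᵢ ∈ ℤ/2pℤ`) is a product-one sequence iff its length
is even and it can be split into halves `R⁺, R⁻` of equal size with
`σ(R⁻) - σ(R⁺) ≡ (|R|/2)·p (mod 2p)`. -/

theorem productOne_iff_balanced_split (p : ℕ) (hp : p.Prime) (hodd : Odd p)
    (R : Multiset (ZMod (2 * p))) :
    IsProductOne (R.map (QuaternionGroup.xa : ZMod (2 * p) → QuaternionGroup p)) ↔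
      Even (Multiset.card R) ∧
        ∃ Rp Rm : Multiset (ZMod (2 * p)), R = Rp + Rm ∧
          Multiset.card Rp = Multiset.card Rm ∧
          Rm.sum - Rp.sum = ((Multiset.card Rp : ZMod (2 * p)) * (p : ZMod (2 * p))) := by
  have hpp : (p : ZMod (2 * p)) + (p : ZMod (2 * p)) = 0 := by
    rw [← Nat.cast_add, ← two_mul, ZMod.natCast_self]
  constructor
  · rintro ⟨l, hl, hprod⟩
    set r : List (ZMod (2 * p)) := l.map expo with hrdef
    have hrR : (r : Multiset (ZMod (2 * p))) = R := by
      rw [hrdef, ← Multiset.map_coe, hl, Multiset.map_map]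
      have : (expo ∘ (xa : ZMod (2 * p) → QuaternionGroup p)) = id := by
        funext i; rfl
      rw [this, Multiset.map_id]
    have hlr : l = r.map (xa : ZMod (2 * p) → QuaternionGroup p) := by
      rw [hrdef, List.map_map]
      refine ((List.map_congr_left ?_).symm.trans l.map_id).symm
      intro g hg
      have : g ∈ R.map (xa : ZMod (2 * p) → QuaternionGroup p) := by
        rw [← hl]; exact hg
      obtain ⟨i, _, rfl⟩ := Multiset.mem_map.mp this
      rfl
    have hcard : Multiset.card R = r.length := by rw [← hrR, Multiset.coe_card]
    rcases Nat.even_or_odd r.length with he | ho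
    · obtain ⟨n, hn⟩ := he
      obtain ⟨rp, rm, h1, h2, h3, h4⟩ := prod_map_xa_even p n r (by omega)
      rw [← hlr, hprod, one_def] at h4
      have h4' : (0 : ZMod (2 * p)) = (n : ZMod (2 * p)) * p + rm.sum - rp.sum :=
        QuaternionGroup.a.inj h4
      refine ⟨by rw [hcard, hn]; exact ⟨n, rfl⟩, ↑rp, ↑rm, ?_, ?_, ?_⟩
      · rw [← hrR, ← h3]
      · simp [Multiset.coe_card, h1, h2]
      · simp only [Multiset.sum_coe, Multiset.coe_card, h1]
        linear_combination -h4' - (n : ZMod (2 * p)) * hpp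
    · obtain ⟨n, hn⟩ := ho
      obtain ⟨s, hs⟩ := prod_map_xa_odd p n r hn
      rw [← hlr, hprod, one_def] at hs
      exact absurd hs (by intro h; cases h)
  · rintro ⟨hev, Rp, Rm, rfl, hcard, hsum⟩
    set lp := Rp.toList
    set lm := Rm.toList
    have hlen : lp.length = lm.length := by
      simp [lp, lm, Multiset.length_toList, hcard]
    refine ⟨(interL lp lm).map (xa : ZMod (2 * p) → QuaternionGroup p), ?_, ?_⟩
    · rw [← Multiset.map_coe, interL_coe lp lm hlen]
      simp [lp, lm]
    · rw [interL_prod p lp lm hlen, one_def]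
      congr 1
      have h1 : (lp.length : ZMod (2 * p)) = (Multiset.card Rp : ZMod (2 * p)) := by
        simp [lp, Multiset.length_toList]
      have h2 : lm.sum = Rm.sum := by simp [lm, Multiset.sum_toList]
      have h3 : lp.sum = Rp.sum := by simp [lp, Multiset.sum_toList]
      rw [h1, h2, h3]
      linear_combination hsum + (Multiset.card Rp : ZMod (2 * p)) * hpp
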